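/- Let r > 0 and H > 1 be real numbers, and set p² = 4/(r(H + 3)), B = r·√((H − 1)(H + 4)/(6(H + 3))), q = −√((H − 1)(H + 3)(H + 4))/(√24 · r). Then q·p²·r³ = −2B; that is, the Maxwell equation ∇ᵃF_{ab} = (total Dirac current)_b, which reduces to 4B/r³ = −q p² along the Reeb direction, holds for these values. -/

import Mathlib

/-- the explicit values of p², B, q satisfy the reduced Maxwell
equation q·p²·r³ = −2B. -/
theorem stmt_14 (r H : ℝ) (hr : 0 < r) (hH : 1 < H) (p2 B q : ℝ)
    (hp2 : p2 = 4 / (r * (H + 3)))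
    (hB : B = r * Real.sqrt ((H - 1) * (H + 4) / (6 * (H + 3))))
    (hq : q = - Real.sqrt ((H - 1) * (H + 3) * (H + 4)) / (Real.sqrt 24 * r)) :
    q * p2 * r ^ 3 = -2 * B := by
  subst hp2 hB hq
  have h3 : (0:ℝ) < H + 3 := by linarith
  set x : ℝ := (H - 1) * (H + 4) / (6 * (H + 3)) with hxdef
  have hx : 0 ≤ x := by
    apply div_nonneg
    · nlinarith
    · linarith
  have h24 : Real.sqrt 24 = 2 * Real.sqrt 6 := by
    rw [show (24:ℝ) = 4 * 6 by norm_num, Real.sqrt_mul (by norm_num),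
      show Real.sqrt 4 = 2 by
        rw [show (4:ℝ) = 2 ^ 2 by norm_num, Real.sqrt_sq (by norm_num)]]
  have hP : Real.sqrt ((H - 1) * (H + 3) * (H + 4))
      = (H + 3) * (Real.sqrt 6 * Real.sqrt x) := by
    rw [← Real.sqrt_mul (by norm_num) x, ← Real.sqrt_sq h3.le,
      ← Real.sqrt_mul (by positivity)]
    congr 1
    rw [hxdef]
    simp only [Real.sqrt_sq h3.le]
    field_simp
  have h6 : (0:ℝ) < Real.sqrt 6 := Real.sqrt_pos.mpr (by norm_num)
  rw [hP, h24]
  field_simp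
  ring
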